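/- Let $E$ be a Banach space with a shrinking metric compact approximation of the identity $(K_\alpha)$ (compact operators, $\sup_\alpha\|K_\alpha\|\le 1$, $K_\alpha^*x^*\to x^*$ for all $x^*\in E^*$). Then for every Banach space $F$, the space of compact operators $\mathcal{K}(E,F)$ is an ideal in $\mathcal{L}(E,F)$: assuming further that $(K_\alpha)$ converges weak-star in $\mathcal{K}(E)^{**}$, the map $\Lambda(f)(T)=\lim_\alpha f(T\circ K_\alpha)$ defines a norm-one projection on $\mathcal{L}(E,F)^*$ with kernel $\mathcal{K}(E,F)^\perp$. -/

import Mathlib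

namespace NormedSpace

abbrev Dual (𝕜 : Type*) [NontriviallyNormedField 𝕜] (E : Type*) [SeminormedAddCommGroup E]
    [NormedSpace 𝕜 E] : Type _ :=
  E →L[𝕜] 𝕜

end NormedSpace

open Filter NormedSpace Metric Set

lemma key_tendsto {E : Type*} [NormedAddCommGroup E] [NormedSpace ℝ E]
    {F : Type*} [NormedAddCommGroup F] [NormedSpace ℝ F]
    {ι : Type*} [Preorder ι] [IsDirected ι (· ≤ ·)] [Nonempty ι]
    (K : ι → E →L[ℝ] E) (hnorm : ∀ α, ‖K α‖ ≤ 1)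
    (hadj : ∀ xs : E →L[ℝ] ℝ, Tendsto (fun α => xs.comp (K α)) atTop (nhds xs))
    (S : E →L[ℝ] F) (hS : IsCompactOperator S) :
    Tendsto (fun α => S.comp (K α)) atTop (nhds S) := by
  rw [Metric.tendsto_nhds]
  intro ε hε
  set δ := ε / 8 with hδdef
  have hδ : 0 < δ := by positivity
  -- total boundedness of the image of the unit ball
  have htb : TotallyBounded (⇑S '' Metric.closedBall 0 1) := by
    obtain ⟨Kc, hKc, hKcmem⟩ := hS
    obtain ⟨r, hr, hball⟩ := Metric.mem_nhds_iff.1 hKcmem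
    have hcpt2 : IsCompact ((fun v : F => (2 / r) • v) '' Kc) :=
      hKc.image (continuous_const_smul _)
    refine hcpt2.totallyBounded.subset ?_
    rintro _ ⟨x, hx, rfl⟩
    have hx1 : ‖x‖ ≤ 1 := mem_closedBall_zero_iff.1 hx
    have hmem : (r / 2) • x ∈ Metric.ball (0 : E) r := by
      rw [mem_ball_zero_iff, norm_smul]
      have h2 : ‖(r / 2 : ℝ)‖ = r / 2 := abs_of_pos (by linarith)
      nlinarith [norm_nonneg x]
    have hin : S ((r / 2) • x) ∈ Kc := hball hmem
    refine ⟨S ((r / 2) • x), hin, ?_⟩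
    have h1 : (2 / r) * (r / 2) = 1 := by field_simp
    show (2 / r) • S ((r / 2) • x) = S x
    rw [map_smul, smul_smul, h1, one_smul]
  obtain ⟨t, htfin, htcover⟩ := Metric.totallyBounded_iff.1 htb δ hδ
  haveI := htfin.fintype
  set Φ : Dual ℝ F → (t → ℝ) := fun y i => y (i : F) with hΦ
  have hPtb : TotallyBounded (Φ '' Metric.closedBall 0 1) := by
    obtain ⟨R, hR⟩ : ∃ R, ∀ i : t, ‖(i : F)‖ ≤ R := Finite.exists_le _
    have hsub : Φ '' Metric.closedBall 0 1 ⊆ Metric.closedBall 0 (max R 0) := by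
      rintro _ ⟨y, hy, rfl⟩
      rw [mem_closedBall_zero_iff]
      refine (pi_norm_le_iff_of_nonneg (le_max_right _ _)).2 fun i => ?_
      have hy1 : ‖y‖ ≤ 1 := mem_closedBall_zero_iff.1 hy
      have h1 : ‖Φ y i‖ ≤ ‖y‖ * ‖(i : F)‖ := y.le_opNorm _
      have h2 : ‖y‖ * ‖(i : F)‖ ≤ 1 * R :=
        mul_le_mul hy1 (hR i) (norm_nonneg _) zero_le_one
      have := le_max_left R 0
      linarith
    exact (isCompact_closedBall _ _).totallyBounded.subset hsub
  obtain ⟨Q, hQsub, hQfin, hQcover⟩ := Metric.finite_approx_of_totallyBounded hPtb δ hδ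
  have hQpre : ∀ q ∈ Q, ∃ y' : Dual ℝ F, ‖y'‖ ≤ 1 ∧ Φ y' = q := by
    intro q hq
    obtain ⟨y', hy', rfl⟩ := hQsub hq
    exact ⟨y', mem_closedBall_zero_iff.1 hy', rfl⟩
  choose! g hg1 hg2 using hQpre
  set Y : Set (Dual ℝ F) := g '' Q with hY
  have hYfin : Y.Finite := hQfin.image g
  have hnet : ∀ u : Dual ℝ F, ‖u‖ ≤ 1 →
      ∃ y' ∈ Y, ‖y'‖ ≤ 1 ∧ ∀ i : t, |u (i : F) - y' (i : F)| < δ := by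
    intro u hu
    have hmem : Φ u ∈ Φ '' Metric.closedBall 0 1 :=
      ⟨u, mem_closedBall_zero_iff.2 hu, rfl⟩
    obtain ⟨q, hq, hdist⟩ := Set.mem_iUnion₂.1 (hQcover hmem)
    refine ⟨g q, ⟨q, hq, rfl⟩, hg1 q hq, fun i => ?_⟩
    have hd : dist (Φ u) (Φ (g q)) < δ := by
      rw [hg2 q hq]; exact mem_ball.1 hdist
    have := (dist_pi_lt_iff hδ).1 hd i
    simpa [Φ, Real.dist_eq] using this
  have hev : ∀ᶠ α in atTop, ∀ y' ∈ Y, ‖(y'.comp S).comp (K α) - y'.comp S‖ < δ := by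
    rw [eventually_all_finite hYfin]
    intro y' _
    have := Metric.tendsto_nhds.1 (hadj (y'.comp S)) δ hδ
    simpa [dist_eq_norm] using this
  filter_upwards [hev] with α hα
  rw [dist_eq_norm]
  have hmain : ∀ x : E, ‖x‖ ≤ 1 → ‖(S.comp (K α) - S) x‖ ≤ 7 * δ := by
    intro x hx
    refine NormedSpace.norm_le_dual_bound ℝ _ (by positivity) fun y => ?_
    rcases eq_or_ne y 0 with rfl | hy
    · simp
    · have hyn : 0 < ‖y‖ := norm_pos_iff.mpr hy
      set u : Dual ℝ F := ‖y‖⁻¹ • y with hu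
      have hu1 : ‖u‖ ≤ 1 := by
        rw [hu, norm_smul, norm_inv, norm_norm, inv_mul_cancel₀ hyn.ne']
      obtain ⟨y', hy'Y, hy'1, hpi⟩ := hnet u hu1
      have hside : ∀ w : E, ‖w‖ ≤ 1 → |u (S w) - y' (S w)| ≤ 3 * δ := by
        intro w hw
        have hmem : S w ∈ ⇑S '' Metric.closedBall 0 1 :=
          ⟨w, mem_closedBall_zero_iff.2 hw, rfl⟩
        obtain ⟨i, hit, hball⟩ := Set.mem_iUnion₂.1 (htcover hmem)
        have hdi : ‖S w - i‖ < δ := by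
          rw [← dist_eq_norm]; exact mem_ball.1 hball
        have h1 : |u (S w) - u i| ≤ δ := by
          rw [← map_sub]
          calc |u (S w - i)| ≤ ‖u‖ * ‖S w - i‖ := u.le_opNorm _
            _ ≤ 1 * δ := mul_le_mul hu1 hdi.le (norm_nonneg _) zero_le_one
            _ = δ := one_mul δ
        have h3 : |y' i - y' (S w)| ≤ δ := by
          rw [← map_sub]
          calc |y' (i - S w)| ≤ ‖y'‖ * ‖i - S w‖ := y'.le_opNorm _
            _ ≤ 1 * δ := by
                rw [norm_sub_rev]
                exact mul_le_mul hy'1 hdi.le (norm_nonneg _) zero_le_one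
            _ = δ := one_mul δ
        have h2 : |u i - y' i| < δ := hpi ⟨i, hit⟩
        have hdecomp : u (S w) - y' (S w)
            = (u (S w) - u i) + (u i - y' i) + (y' i - y' (S w)) := by ring
        rw [hdecomp]
        calc |(u (S w) - u i) + (u i - y' i) + (y' i - y' (S w))|
            ≤ |(u (S w) - u i) + (u i - y' i)| + |y' i - y' (S w)| := abs_add_le _ _
          _ ≤ |u (S w) - u i| + |u i - y' i| + |y' i - y' (S w)| := by
              linarith [abs_add_le (u (S w) - u i) (u i - y' i)]
          _ ≤ 3 * δ := by linarith
      have hmidn : ‖(y'.comp S).comp (K α) - y'.comp S‖ < δ := hα y' hy'Y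
      have hmid : |y' (S (K α x)) - y' (S x)| ≤ δ := by
        have h := ((y'.comp S).comp (K α) - y'.comp S).le_opNorm x
        simp only [ContinuousLinearMap.sub_apply, ContinuousLinearMap.comp_apply,
          Real.norm_eq_abs] at h
        nlinarith [norm_nonneg x, abs_nonneg (y' (S (K α x)) - y' (S x))]
      have hKx : ‖K α x‖ ≤ 1 := by
        calc ‖K α x‖ ≤ ‖K α‖ * ‖x‖ := (K α).le_opNorm x
          _ ≤ 1 * 1 := mul_le_mul (hnorm α) hx (norm_nonneg _) zero_le_one
          _ = 1 := one_mul 1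
      have hucalc : |u ((S.comp (K α) - S) x)| ≤ 7 * δ := by
        have hexp : u ((S.comp (K α) - S) x)
            = (u (S (K α x)) - y' (S (K α x))) + (y' (S (K α x)) - y' (S x))
              + (y' (S x) - u (S x)) := by
          simp only [ContinuousLinearMap.sub_apply, ContinuousLinearMap.comp_apply, map_sub]
          ring
        have hs1 := hside (K α x) hKx
        have hs2 := hside x hx
        have hs2' : |y' (S x) - u (S x)| ≤ 3 * δ := by rwa [abs_sub_comm]
        rw [hexp]
        calc |(u (S (K α x)) - y' (S (K α x))) + (y' (S (K α x)) - y' (S x))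
              + (y' (S x) - u (S x))|
            ≤ |(u (S (K α x)) - y' (S (K α x))) + (y' (S (K α x)) - y' (S x))|
              + |y' (S x) - u (S x)| := abs_add_le _ _
          _ ≤ |u (S (K α x)) - y' (S (K α x))| + |y' (S (K α x)) - y' (S x)|
              + |y' (S x) - u (S x)| := by
              linarith [abs_add_le (u (S (K α x)) - y' (S (K α x)))
                (y' (S (K α x)) - y' (S x))]
          _ ≤ 7 * δ := by linarith
      have hyu : y ((S.comp (K α) - S) x) = ‖y‖ * u ((S.comp (K α) - S) x) := by
        rw [hu]
        simp only [ContinuousLinearMap.smul_apply, smul_eq_mul]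
        field_simp
      rw [Real.norm_eq_abs, hyu, abs_mul, abs_of_nonneg hyn.le]
      calc ‖y‖ * |u ((S.comp (K α) - S) x)| ≤ ‖y‖ * (7 * δ) := by
            exact mul_le_mul_of_nonneg_left hucalc hyn.le
        _ = 7 * δ * ‖y‖ := by ring
  have hop : ‖S.comp (K α) - S‖ ≤ 7 * δ := by
    refine ContinuousLinearMap.opNorm_le_bound _ (by positivity) fun x => ?_
    rcases eq_or_ne x 0 with rfl | hx
    · simp
    · have hx' : 0 < ‖x‖ := norm_pos_iff.mpr hx
      have h := hmain (‖x‖⁻¹ • x)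
        (by rw [norm_smul, norm_inv, norm_norm, inv_mul_cancel₀ hx'.ne'])
      rw [map_smul, norm_smul, norm_inv, norm_norm] at h
      have : ‖(S.comp (K α) - S) x‖ = ‖x‖ * (‖x‖⁻¹ * ‖(S.comp (K α) - S) x‖) := by
        field_simp
      rw [this]
      calc ‖x‖ * (‖x‖⁻¹ * ‖(S.comp (K α) - S) x‖) ≤ ‖x‖ * (7 * δ) :=
            mul_le_mul_of_nonneg_left h hx'.le
        _ = 7 * δ * ‖x‖ := by ring
  have : 7 * δ < ε := by rw [hδdef]; linarith
  linarith
theorem stmt14 {E : Type*} [NormedAddCommGroup E] [NormedSpace ℝ E] [CompleteSpace E]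
    {F : Type*} [NormedAddCommGroup F] [NormedSpace ℝ F] [CompleteSpace F]
    {ι : Type*} [Preorder ι] [IsDirected ι (· ≤ ·)] [Nonempty ι]
    (K : ι → E →L[ℝ] E) (hcpt : ∀ α, IsCompactOperator (K α))
    (hnorm : ∀ α, ‖K α‖ ≤ 1)
    (hadj : ∀ xs : E →L[ℝ] ℝ, Tendsto (fun α => xs.comp (K α)) atTop (nhds xs))
    (hwstar : ∀ ψ : Dual ℝ (E →L[ℝ] E), ∃ l : ℝ, Tendsto (fun α => ψ (K α)) atTop (nhds l)) :
    ∃ Λ : Dual ℝ (E →L[ℝ] F) →L[ℝ] Dual ℝ (E →L[ℝ] F),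
      (∀ (f : Dual ℝ (E →L[ℝ] F)) (T : E →L[ℝ] F),
        Tendsto (fun α => f (T.comp (K α))) atTop (nhds (Λ f T))) ∧
      ‖Λ‖ ≤ 1 ∧
      (∀ f, Λ (Λ f) = Λ f) ∧
      (∀ f : Dual ℝ (E →L[ℝ] F), Λ f = 0 ↔ ∀ T : E →L[ℝ] F, IsCompactOperator T → f T = 0) := by
  classical
  choose lim hlim using hwstar
  set C : (E →L[ℝ] F) →L[ℝ] ((E →L[ℝ] E) →L[ℝ] (E →L[ℝ] F)) :=
    ContinuousLinearMap.compL ℝ E E F with hC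
  set L : Dual ℝ (E →L[ℝ] F) → (E →L[ℝ] F) → ℝ := fun f T => lim (f.comp (C T)) with hLdef
  have hL : ∀ f T, Tendsto (fun α => f (T.comp (K α))) atTop (nhds (L f T)) := by
    intro f T
    have h := hlim (f.comp (C T))
    simpa [hC, hLdef] using h
  have hTK : ∀ (T : E →L[ℝ] F) (α : ι), IsCompactOperator ⇑(T.comp (K α)) := by
    intro T α
    exact (hcpt α).clm_comp T
  have hLcompact : ∀ (f : Dual ℝ (E →L[ℝ] F)) (S : E →L[ℝ] F),
      IsCompactOperator ⇑S → L f S = f S := by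
    intro f S hS
    have h2 : Tendsto (fun α => f (S.comp (K α))) atTop (nhds (f S)) :=
      (f.continuous.tendsto S).comp (key_tendsto K hnorm hadj S hS)
    exact tendsto_nhds_unique (hL f S) h2
  have hLbound : ∀ f T, ‖L f T‖ ≤ ‖f‖ * ‖T‖ := by
    intro f T
    refine le_of_tendsto (hL f T).norm (Eventually.of_forall fun α => ?_)
    calc ‖f (T.comp (K α))‖ ≤ ‖f‖ * ‖T.comp (K α)‖ := f.le_opNorm _
      _ ≤ ‖f‖ * (‖T‖ * ‖K α‖) :=
          mul_le_mul_of_nonneg_left (T.opNorm_comp_le (K α)) (norm_nonneg f)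
      _ ≤ ‖f‖ * ‖T‖ := mul_le_mul_of_nonneg_left
          (mul_le_of_le_one_right (norm_nonneg T) (hnorm α)) (norm_nonneg f)
  have haddT : ∀ f T T', L f (T + T') = L f T + L f T' := by
    intro f T T'
    refine tendsto_nhds_unique (hL f (T + T')) ?_
    have := (hL f T).add (hL f T')
    simpa [ContinuousLinearMap.add_comp, map_add] using this
  have hsmulT : ∀ (c : ℝ) f T, L f (c • T) = c * L f T := by
    intro c f T
    refine tendsto_nhds_unique (hL f (c • T)) ?_
    have := (hL f T).const_mul c
    simpa [ContinuousLinearMap.smul_comp, map_smul, smul_eq_mul] using this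
  have haddf : ∀ f g T, L (f + g) T = L f T + L g T := by
    intro f g T
    refine tendsto_nhds_unique (hL (f + g) T) ?_
    have := (hL f T).add (hL g T)
    simpa using this
  have hsmulf : ∀ (c : ℝ) f T, L (c • f) T = c * L f T := by
    intro c f T
    refine tendsto_nhds_unique (hL (c • f) T) ?_
    have := (hL f T).const_mul c
    simpa [smul_eq_mul] using this
  let Lf : Dual ℝ (E →L[ℝ] F) → Dual ℝ (E →L[ℝ] F) := fun f =>
    LinearMap.mkContinuous
      { toFun := L f
        map_add' := haddT f
        map_smul' := fun c T => hsmulT c f T } ‖f‖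
      (fun T => hLbound f T)
  have hLf : ∀ f T, Lf f T = L f T := fun f T => rfl
  have hLfnorm : ∀ f, ‖Lf f‖ ≤ ‖f‖ := fun f =>
    LinearMap.mkContinuous_norm_le _ (norm_nonneg f) _
  let Λ : Dual ℝ (E →L[ℝ] F) →L[ℝ] Dual ℝ (E →L[ℝ] F) :=
    LinearMap.mkContinuous
      { toFun := Lf
        map_add' := fun f g => by
          ext T
          simp only [ContinuousLinearMap.add_apply, hLf]
          exact haddf f g T
        map_smul' := fun c f => by
          ext T
          simp only [ContinuousLinearMap.smul_apply, hLf, RingHom.id_apply, smul_eq_mul]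
          exact hsmulf c f T } 1
      (fun f => by simpa using hLfnorm f)
  have hΛ : ∀ f T, Λ f T = L f T := fun f T => rfl
  refine ⟨Λ, ?_, ?_, ?_, ?_⟩
  · intro f T
    rw [hΛ]
    exact hL f T
  · exact LinearMap.mkContinuous_norm_le _ zero_le_one _
  · intro f
    ext T
    rw [hΛ, hΛ]
    refine tendsto_nhds_unique (a := L (Λ f) T) ?_ (hL f T)
    have heq : (fun α => f (T.comp (K α))) = fun α => (Λ f) (T.comp (K α)) := by
      funext α
      rw [hΛ, hLcompact f _ (hTK T α)]
    rw [heq] at *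
    exact hL (Λ f) T
  · intro f
    constructor
    · intro hf T hT
      have := hLcompact f T hT
      rw [← this, ← hΛ, hf]
      rfl
    · intro h
      ext T
      rw [hΛ]
      have h0 : Tendsto (fun α => f (T.comp (K α))) atTop (nhds 0) := by
        have heq : (fun α => f (T.comp (K α))) = fun _ => (0 : ℝ) := by
          funext α
          exact h _ (hTK T α)
        rw [heq]
        exact tendsto_const_nhds
      have := tendsto_nhds_unique (hL f T) h0
      simpa using this
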